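/- Let M be a deterministic n×n symmetric matrix, p ∈ (0,1), E the subsampling residual of M, and u ∈ ℝ^n a deterministic vector. Set w = u ∘ u and 𝓜 = M ∘ M. Then Var(u^T E u) = ((1−p)/p) · ( 2 w^T 𝓜 w − Σ_{k=1}^n w(k)² 𝓜_{kk} ). -/

import Mathlib

open MeasureTheory ProbabilityTheory Filter Matrix
open scoped ENNReal NNReal BigOperators

/-- The spectral norm (largest singular value) of a real matrix, i.e. the operator norm
of the induced map between Euclidean spaces. -/
noncomputable def spectralNorm' {m n : Type*} [Fintype m] [Fintype n] [DecidableEq n]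
    (A : Matrix m n ℝ) : ℝ :=
  ‖LinearMap.toContinuousLinearMap (Matrix.toEuclideanLin A)‖

/-- The Euclidean norm of a vector. -/
noncomputable def euclNorm {n : Type*} [Fintype n] (x : n → ℝ) : ℝ :=
  Real.sqrt (∑ i, x i ^ 2)

/-- The sup norm `max_{i,j} |A i j|` of a matrix. -/
noncomputable def supNorm {m n : Type*} [Fintype m] [Fintype n] (A : Matrix m n ℝ) : ℝ :=
  ‖(fun i j => A i j : m → n → ℝ)‖

/-- An `m × m` Bernoulli-type symmetric random matrix with parameter `p`: the
on-or-above-diagonal entries are independent, equal to `√((1-p)/p)` with probability `p`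
and to `-√(p/(1-p))` with probability `1-p`. -/
def IsBernoulliType {Ω : Type*} [MeasurableSpace Ω] (P : Measure Ω) {m : ℕ} (p : ℝ)
    (C : Ω → Matrix (Fin m) (Fin m) ℝ) : Prop :=
  (∀ ω, (C ω).IsSymm) ∧
  (∀ i j, Measurable fun ω => C ω i j) ∧
  iIndepFun (β := fun _ : {q : Fin m × Fin m // q.1 ≤ q.2} => ℝ)
    (fun q ω => C ω q.val.1 q.val.2) P ∧
  ∀ i j : Fin m, i ≤ j →
    P {ω | C ω i j = Real.sqrt ((1 - p) / p)} = ENNReal.ofReal p ∧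
    P {ω | C ω i j = -Real.sqrt (p / (1 - p))} = ENNReal.ofReal (1 - p)

/-- `E` is the subsampling residual `E = S - M` of the symmetric matrix `M` with sampling
probability `p`; equivalently `E = √((1-p)/p) • (M ∘ C)` with `C` Bernoulli-type. -/
def IsSubsampleResidual {Ω : Type*} [MeasurableSpace Ω] (P : Measure Ω) {n : ℕ} (p : ℝ)
    (M : Matrix (Fin n) (Fin n) ℝ) (E : Ω → Matrix (Fin n) (Fin n) ℝ) : Prop :=
  ∃ C : Ω → Matrix (Fin n) (Fin n) ℝ, IsBernoulliType P p C ∧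
    ∀ ω, E ω = Real.sqrt ((1 - p) / p) • Matrix.hadamard M (C ω)


lemma sum_pairs {n : ℕ} (f : Fin n × Fin n → ℝ) (hf : ∀ i j, f (i, j) = f (j, i)) :
    ∑ q : Fin n × Fin n, f q
      = ∑ q : {q : Fin n × Fin n // q.1 ≤ q.2},
          (if q.1.1 = q.1.2 then (1 : ℝ) else 2) * f q.1 := by
  classical
  rw [← Finset.sum_subtype (Finset.univ.filter fun q : Fin n × Fin n => q.1 ≤ q.2)
    (by simp) (fun q => (if q.1 = q.2 then (1 : ℝ) else 2) * f q)]
  have hsplit : (Finset.univ.filter fun q : Fin n × Fin n => q.1 ≤ q.2)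
      = (Finset.univ.filter fun q : Fin n × Fin n => q.1 < q.2)
        ∪ (Finset.univ.filter fun q : Fin n × Fin n => q.1 = q.2) := by
    rw [← Finset.filter_or]
    apply Finset.filter_congr
    intro q _
    simp [le_iff_lt_or_eq]
  have hdisj : Disjoint (Finset.univ.filter fun q : Fin n × Fin n => q.1 < q.2)
      (Finset.univ.filter fun q : Fin n × Fin n => q.1 = q.2) := by
    simp only [Finset.disjoint_filter]
    intro q _ hlt heq
    exact absurd heq (ne_of_lt hlt)
  rw [hsplit, Finset.sum_union hdisj]
  have h1 : ∑ q ∈ (Finset.univ.filter fun q : Fin n × Fin n => q.1 < q.2),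
      (if q.1 = q.2 then (1 : ℝ) else 2) * f q
      = 2 * ∑ q ∈ (Finset.univ.filter fun q : Fin n × Fin n => q.1 < q.2), f q := by
    rw [Finset.mul_sum]
    apply Finset.sum_congr rfl
    intro q hq
    simp only [Finset.mem_filter] at hq
    rw [if_neg (ne_of_lt hq.2)]
  have h2 : ∑ q ∈ (Finset.univ.filter fun q : Fin n × Fin n => q.1 = q.2),
      (if q.1 = q.2 then (1 : ℝ) else 2) * f q
      = ∑ q ∈ (Finset.univ.filter fun q : Fin n × Fin n => q.1 = q.2), f q := by
    apply Finset.sum_congr rfl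
    intro q hq
    simp only [Finset.mem_filter] at hq
    rw [if_pos hq.2, one_mul]
  rw [h1, h2]
  -- now handle LHS
  have hL : ∑ q : Fin n × Fin n, f q
      = (∑ q ∈ (Finset.univ.filter fun q : Fin n × Fin n => q.1 ≤ q.2), f q)
        + ∑ q ∈ (Finset.univ.filter fun q : Fin n × Fin n => ¬ q.1 ≤ q.2), f q :=
    (Finset.sum_filter_add_sum_filter_not _ _ _).symm
  have hswap : ∑ q ∈ (Finset.univ.filter fun q : Fin n × Fin n => ¬ q.1 ≤ q.2), f q
      = ∑ q ∈ (Finset.univ.filter fun q : Fin n × Fin n => q.1 < q.2), f q := by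
    apply Finset.sum_nbij' Prod.swap Prod.swap
    · intro q hq; simp only [Finset.mem_filter, not_le] at hq ⊢; exact ⟨Finset.mem_univ _, hq.2⟩
    · intro q hq; simp only [Finset.mem_filter, not_le] at hq ⊢; exact ⟨Finset.mem_univ _, hq.2⟩
    · intro q _; simp
    · intro q _; simp
    · intro q _; exact (hf q.2 q.1).symm
  rw [hL, hswap, hsplit, Finset.sum_union hdisj]
  ring

lemma sum_pairs_diag {n : ℕ} (g : Fin n → ℝ) :
    ∑ q : {q : Fin n × Fin n // q.1 ≤ q.2},
        (if q.1.1 = q.1.2 then g q.1.1 else 0) = ∑ k, g k := by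
  classical
  rw [← Finset.sum_subtype (Finset.univ.filter fun q : Fin n × Fin n => q.1 ≤ q.2)
    (by simp) (fun q => if q.1 = q.2 then g q.1 else 0)]
  rw [← Finset.sum_filter]
  rw [Finset.filter_filter]
  have : (Finset.univ.filter fun q : Fin n × Fin n => q.1 ≤ q.2 ∧ q.1 = q.2)
      = Finset.univ.filter fun q : Fin n × Fin n => q.1 = q.2 := by
    apply Finset.filter_congr
    intro q _
    constructor
    · exact fun h => h.2
    · exact fun h => ⟨le_of_eq h, h⟩
  rw [this]
  apply Finset.sum_nbij' (fun q : Fin n × Fin n => q.1) (fun k => (k, k))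
  · intro q _; exact Finset.mem_univ _
  · intro k _; simp
  · intro q hq; simp only [Finset.mem_filter] at hq; exact Prod.ext rfl hq.2
  · intro k _; rfl
  · intro q _; rfl


lemma bern_facts {Ω : Type*} [MeasurableSpace Ω] (P : Measure Ω) [IsProbabilityMeasure P]
    {p : ℝ} (hp0 : 0 < p) (hp1 : p < 1) {X : Ω → ℝ} (hX : Measurable X)
    (ha : P {ω | X ω = Real.sqrt ((1 - p) / p)} = ENNReal.ofReal p)
    (hb : P {ω | X ω = -Real.sqrt (p / (1 - p))} = ENNReal.ofReal (1 - p)) :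
    MemLp X 2 P ∧ variance X P = 1 := by
  set a := Real.sqrt ((1 - p) / p) with ha_def
  set b := -Real.sqrt (p / (1 - p)) with hb_def
  have hp1' : (0:ℝ) < 1 - p := by linarith
  have ha0 : 0 < a := Real.sqrt_pos.2 (div_pos hp1' hp0)
  have hb0 : b < 0 := neg_neg_iff_pos.2 (Real.sqrt_pos.2 (div_pos hp0 hp1'))
  have hab : a ≠ b := by linarith
  set A : Set Ω := {ω | X ω = a} with hA_def
  set B : Set Ω := {ω | X ω = b} with hB_def
  have hAm : MeasurableSet A := hX (measurableSet_singleton a)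
  have hBm : MeasurableSet B := hX (measurableSet_singleton b)
  have hdisj : Disjoint A B := by
    rw [Set.disjoint_left]
    intro ω hωA hωB
    exact hab (hωA.symm.trans hωB)
  have hunion : P (A ∪ B) = 1 := by
    rw [measure_union hdisj hBm, ha, hb, ← ENNReal.ofReal_add hp0.le hp1'.le]
    simp
  have hae : ∀ᵐ ω ∂P, ω ∈ A ∪ B := by
    have := (prob_compl_eq_zero_iff (hAm.union hBm)).2 hunion
    rw [ae_iff]
    exact this
  have hmem : MemLp X 2 P := by
    apply MemLp.of_bound hX.aestronglyMeasurable (max a (-b))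
    filter_upwards [hae] with ω hω
    rcases hω with hω | hω
    · rw [hω]; rw [Real.norm_eq_abs, abs_of_pos ha0]; exact le_max_left _ _
    · rw [hω]; rw [Real.norm_eq_abs, abs_of_neg hb0]; exact le_max_right _ _
  refine ⟨hmem, ?_⟩
  -- integrals of indicators
  have key : ∀ (c d : ℝ), (fun ω => c * X ω + d * X ω ^ 2)
      =ᵐ[P] fun ω => A.indicator (fun _ => c * a + d * a ^ 2) ω
        + B.indicator (fun _ => c * b + d * b ^ 2) ω := by
    intro c d
    filter_upwards [hae] with ω hω
    rcases hω with hω | hω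
    · have hωB : ω ∉ B := fun hB => hab (hω.symm.trans hB)
      rw [Set.indicator_of_mem hω, Set.indicator_of_notMem hωB, hω]
      ring
    · have hωA : ω ∉ A := fun hA => hab (hA.symm.trans hω)
      rw [Set.indicator_of_mem hω, Set.indicator_of_notMem hωA, hω]
      ring
  have hint : ∀ (c d : ℝ), ∫ ω, (c * X ω + d * X ω ^ 2) ∂P
      = (c * a + d * a ^ 2) * p + (c * b + d * b ^ 2) * (1 - p) := by
    intro c d
    rw [integral_congr_ae (key c d), integral_add
      ((integrable_const _).indicator hAm) ((integrable_const _).indicator hBm),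
      integral_indicator_const _ hAm, integral_indicator_const _ hBm,
      measureReal_def, measureReal_def, ha, hb, smul_eq_mul, smul_eq_mul,
      ENNReal.toReal_ofReal hp0.le, ENNReal.toReal_ofReal hp1'.le]
    ring
  have hpa : p * a = Real.sqrt (p * (1 - p)) := by
    rw [ha_def]
    rw [show p * (1 - p) = p ^ 2 * ((1 - p) / p) by field_simp]
    rw [Real.sqrt_mul (sq_nonneg p), Real.sqrt_sq hp0.le]
  have hpb : (1 - p) * Real.sqrt (p / (1 - p)) = Real.sqrt (p * (1 - p)) := by
    rw [show p * (1 - p) = (1 - p) ^ 2 * (p / (1 - p)) by field_simp]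
    rw [Real.sqrt_mul (sq_nonneg _), Real.sqrt_sq hp1'.le]
  have ha2 : a ^ 2 = (1 - p) / p := Real.sq_sqrt (le_of_lt (div_pos hp1' hp0))
  have hb2 : b ^ 2 = p / (1 - p) := by
    rw [hb_def, neg_pow]
    simp [Real.sq_sqrt (le_of_lt (div_pos hp0 hp1'))]
  have hEX : ∫ ω, X ω ∂P = 0 := by
    have := hint 1 0
    simp only [one_mul, zero_mul, add_zero] at this
    rw [this, hb_def]
    rw [mul_comm a p, hpa]
    rw [show -Real.sqrt (p / (1 - p)) * (1 - p) = -((1 - p) * Real.sqrt (p / (1 - p))) by ring, hpb]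
    ring
  have hEX2 : ∫ ω, X ω ^ 2 ∂P = 1 := by
    have := hint 0 1
    simp only [zero_mul, one_mul, zero_add] at this
    rw [this, ha2, hb2]
    field_simp
    ring
  rw [variance_eq_sub hmem]
  have h1 : ∫ ω, (X ^ 2) ω ∂P = 1 := by
    simpa using hEX2
  have h2 : ∫ ω, X ω ∂P = 0 := hEX
  rw [show P[X ^ 2] = ∫ ω, (X ^ 2) ω ∂P from rfl, h1,
    show P[X] = ∫ ω, X ω ∂P from rfl, h2]
  norm_num

/-- the variance of `uᵀ E u` for the subsampling residual `E`. -/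
theorem variance_quadratic_form_subsample_residual
    {Ω : Type*} [MeasurableSpace Ω] (P : Measure Ω) [IsProbabilityMeasure P]
    {n : ℕ} (M : Matrix (Fin n) (Fin n) ℝ) (p : ℝ) (u : Fin n → ℝ)
    (E : Ω → Matrix (Fin n) (Fin n) ℝ)
    (hsymm : M.IsSymm) (hp0 : 0 < p) (hp1 : p < 1)
    (hE : IsSubsampleResidual P p M E) :
    variance (fun ω => ∑ i, ∑ j, u i * E ω i j * u j) P =
      (1 - p) / p *
        (2 * (∑ i, ∑ j, (u i) ^ 2 * (M i j) ^ 2 * (u j) ^ 2) -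
          ∑ k, ((u k) ^ 2) ^ 2 * (M k k) ^ 2) := by
  classical
  obtain ⟨C, ⟨hCsymm, hCmeas, hCindep, hCdist⟩, hEeq⟩ := hE
  set a := Real.sqrt ((1 - p) / p) with ha_def
  have ha2 : a ^ 2 = (1 - p) / p :=
    Real.sq_sqrt (le_of_lt (div_pos (by linarith) hp0))
  set c : {q : Fin n × Fin n // q.1 ≤ q.2} → ℝ :=
    fun q => a * ((if q.1.1 = q.1.2 then (1 : ℝ) else 2)
      * (u q.1.1 * M q.1.1 q.1.2 * u q.1.2)) with hc_def
  set Y : {q : Fin n × Fin n // q.1 ≤ q.2} → Ω → ℝ :=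
    fun q ω => c q * C ω q.1.1 q.1.2 with hY_def
  have hfun : (fun ω => ∑ i, ∑ j, u i * E ω i j * u j) = ∑ q, Y q := by
    funext ω
    rw [Finset.sum_apply]
    have hEentry : ∀ i j, E ω i j = a * (M i j * C ω i j) := by
      intro i j
      rw [hEeq ω]
      simp [Matrix.smul_apply, Matrix.hadamard_apply, smul_eq_mul]
    calc ∑ i, ∑ j, u i * E ω i j * u j
        = ∑ q : Fin n × Fin n, u q.1 * (a * (M q.1 q.2 * C ω q.1 q.2)) * u q.2 := by
          rw [Fintype.sum_prod_type]
          exact Finset.sum_congr rfl fun i _ =>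
            Finset.sum_congr rfl fun j _ => by rw [hEentry]
      _ = ∑ q : {q : Fin n × Fin n // q.1 ≤ q.2}, (if q.1.1 = q.1.2 then (1 : ℝ) else 2)
            * (u q.1.1 * (a * (M q.1.1 q.1.2 * C ω q.1.1 q.1.2)) * u q.1.2) := by
          apply sum_pairs
          intro i j
          simp only
          rw [hsymm.apply i j, (hCsymm ω).apply i j]
          ring
      _ = ∑ q, Y q ω := by
          refine Finset.sum_congr rfl fun q _ => ?_
          rw [hY_def, hc_def]
          ring
  rw [hfun]
  have hfacts : ∀ q : {q : Fin n × Fin n // q.1 ≤ q.2},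
      MemLp (fun ω => C ω q.1.1 q.1.2) 2 P ∧ variance (fun ω => C ω q.1.1 q.1.2) P = 1 :=
    fun q => bern_facts P hp0 hp1 (hCmeas _ _) (hCdist q.1.1 q.1.2 q.2).1
      (hCdist q.1.1 q.1.2 q.2).2
  have hmem : ∀ q ∈ Finset.univ, MemLp (Y q) 2 P :=
    fun q _ => (hfacts q).1.const_mul (c q)
  have hindep : Set.Pairwise ↑(Finset.univ : Finset {q : Fin n × Fin n // q.1 ≤ q.2})
      fun q q' => IndepFun (Y q) (Y q') P := by
    intro q _ q' _ hne
    exact (hCindep.indepFun hne).comp (measurable_const_mul (c q)) (measurable_const_mul (c q'))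
  rw [IndepFun.variance_sum hmem hindep]
  have hvar : ∀ q ∈ Finset.univ, variance (Y q) P = c q ^ 2 := by
    intro q _
    rw [hY_def]
    simp only
    rw [variance_const_mul (c q) (fun ω => C ω q.1.1 q.1.2) P, (hfacts q).2, mul_one]
  rw [Finset.sum_congr rfl hvar]
  -- final algebra
  have step : ∀ q : {q : Fin n × Fin n // q.1 ≤ q.2}, c q ^ 2
      = (1 - p) / p * (2 * ((if q.1.1 = q.1.2 then (1 : ℝ) else 2)
          * ((u q.1.1 * M q.1.1 q.1.2 * u q.1.2) ^ 2)))
        - (1 - p) / p * (if q.1.1 = q.1.2 then (u q.1.1 * M q.1.1 q.1.1 * u q.1.1) ^ 2 else 0) := by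
    intro q
    rw [hc_def]
    by_cases h : q.1.1 = q.1.2
    · simp only [if_pos h]
      rw [← ha2, ← h]
      ring
    · simp only [if_neg h]
      rw [← ha2]
      ring
  rw [Finset.sum_congr rfl fun q _ => step q, Finset.sum_sub_distrib,
    ← Finset.mul_sum, ← Finset.mul_sum, ← Finset.mul_sum, ← mul_sub]
  congr 1
  congr 1
  · congr 1
    rw [← sum_pairs (fun q : Fin n × Fin n => (u q.1 * M q.1 q.2 * u q.2) ^ 2)
      (fun i j => by simp only; rw [hsymm.apply i j]; ring)]
    rw [Fintype.sum_prod_type]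
    exact Finset.sum_congr rfl fun i _ => Finset.sum_congr rfl fun j _ => by ring
  · rw [sum_pairs_diag (fun k => (u k * M k k * u k) ^ 2)]
    exact Finset.sum_congr rfl fun k _ => by ring
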